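/- arXiv:1608.01742 — 2 statements merged into one kernel-verified Lean document; each statement's English description precedes it below -/
import Mathlib

section
/- For all s > 0 and θ ∈ [0,1], one has θ²·H(s) ≤ H(θ·s), where H(u) = -½u²·log(u²) + ½u² for 0 ≤ u ≤ e⁻¹ and H(u) = (2/e)u - 1/(2e²) for u > e⁻¹. -/
noncomputable def H (u : ℝ) : ℝ :=
  if |u| ≤ (Real.exp 1)⁻¹ then
    -(1 / 2) * u ^ 2 * Real.log (u ^ 2) + (1 / 2) * u ^ 2
  else (2 / Real.exp 1) * |u| - 1 / (2 * Real.exp 1 ^ 2)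

theorem H_superhomogeneous :
    ∀ s > (0 : ℝ), ∀ θ ∈ Set.Icc (0 : ℝ) 1, θ ^ 2 * H s ≤ H (θ * s) := by
  intro s hs θ hθ
  obtain ⟨hθ0, hθ1⟩ := hθ
  have he : (0:ℝ) < Real.exp 1 := Real.exp_pos 1
  set e := Real.exp 1 with hedef
  rcases eq_or_lt_of_le hθ0 with h0 | hθpos
  · -- θ = 0
    subst h0
    simp [H, Real.log_zero, le_of_lt (inv_pos.mpr he), Real.exp_nonneg]
  have hts : 0 < θ * s := mul_pos hθpos hs
  have habs_s : |s| = s := abs_of_pos hs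
  have habs_ts : |θ * s| = θ * s := abs_of_pos hts
  have htsles : θ * s ≤ s := by nlinarith
  by_cases hA : s ≤ e⁻¹
  · -- both quadratic
    have hB : θ * s ≤ e⁻¹ := le_trans htsles hA
    rw [H, H, if_pos (by rw [habs_s]; exact hA), if_pos (by rw [habs_ts]; exact hB)]
    have hlogprod : Real.log ((θ * s) ^ 2) = Real.log (θ ^ 2) + Real.log (s ^ 2) := by
      rw [mul_pow]
      exact Real.log_mul (by positivity) (by positivity)
    have hlogθ : Real.log (θ ^ 2) ≤ 0 :=
      Real.log_nonpos (by positivity) (by nlinarith)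
    rw [hlogprod]
    nlinarith [mul_nonneg (sq_nonneg (θ * s)) (neg_nonneg.mpr hlogθ), sq_nonneg (θ*s)]
  · push_neg at hA
    have hes : 1 < e * s := by
      rw [inv_eq_one_div, div_lt_iff₀ he] at hA; linarith
    by_cases hB : θ * s ≤ e⁻¹
    · -- s linear, θs quadratic
      rw [H, H, if_neg (by rw [habs_s]; push_neg; exact hA), if_pos (by rw [habs_ts]; exact hB),
        habs_s]
      have hlog : Real.log (θ * s) ≤ -1 := by
        calc Real.log (θ * s) ≤ Real.log e⁻¹ := Real.log_le_log hts hB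
        _ = -1 := by rw [Real.log_inv, hedef, Real.log_exp]
      have hlogsq : Real.log ((θ * s) ^ 2) = 2 * Real.log (θ * s) := by
        rw [show ((θ * s) ^ 2 : ℝ) = (θ * s) ^ (2 : ℕ) from rfl, Real.log_pow]; push_cast; ring
      have key1 : 2 / e * s - 1 / (2 * e ^ 2) ≤ 3 / 2 * s ^ 2 := by
        rw [div_mul_eq_mul_div, div_sub_div _ _ he.ne' (by positivity : (2 * e ^ 2 : ℝ) ≠ 0),
          div_le_iff₀ (by positivity)]
        nlinarith [mul_nonneg he.le (mul_nonneg
          (by nlinarith : (0:ℝ) ≤ 3 * (e * s) - 1) (by linarith : (0:ℝ) ≤ e * s - 1))]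
      have key2 : θ ^ 2 * (2 / e * s - 1 / (2 * e ^ 2)) ≤ 3 / 2 * (θ * s) ^ 2 := by
        have := mul_le_mul_of_nonneg_left key1 (sq_nonneg θ)
        nlinarith [this]
      rw [hlogsq]
      nlinarith [mul_nonneg (sq_nonneg (θ * s)) (show (0:ℝ) ≤ -1 - Real.log (θ * s) by linarith)]
    · -- both linear
      push_neg at hB
      rw [H, H, if_neg (by rw [habs_s]; push_neg; exact hA),
        if_neg (by rw [habs_ts]; push_neg; exact hB), habs_s, habs_ts]
      have hets : 1 < e * (θ * s) := by
        rw [inv_eq_one_div, div_lt_iff₀ he] at hB; linarith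
      rw [div_mul_eq_mul_div, div_mul_eq_mul_div]
      rw [show θ ^ 2 * (2 * s / e - 1 / (2 * e ^ 2)) = (θ ^ 2 * (2 * s) ) / e - θ ^ 2 / (2 * e ^ 2) by ring]
      have h2 : (0:ℝ) < 2 * e ^ 2 := by positivity
      rw [div_sub_div _ _ (ne_of_gt he) (ne_of_gt h2), div_sub_div _ _ (ne_of_gt he) (ne_of_gt h2),
        div_le_div_iff_of_pos_right (by positivity)]
      nlinarith [mul_nonneg (mul_nonneg he.le (sub_nonneg.mpr hθ1)) (sub_nonneg.mpr hets.le),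
        mul_nonneg (mul_nonneg he.le (sub_nonneg.mpr hθ1)) hθ0,
        mul_nonneg he.le (sq_nonneg (1 - θ))]
end

section
/- Let H : ℝ → ℝ be convex with H(0) = 0, H even, H differentiable on (0,∞) with derivative h satisfying θh(s) ≤ h(θs) and ½h(s)s ≤ H(s) ≤ h(s)s for s > 0, θ ∈ [0,1]. Then for all s, t > 0 and θ ∈ (0,1]: h(s)·t ≤ θ·H(s) + (1/θ)·H(t). -/
theorem abstract_young_inequality (H h : ℝ → ℝ)
    (hconv : ConvexOn ℝ Set.univ H) (hH0 : H 0 = 0)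
    (heven : ∀ x : ℝ, H (-x) = H x)
    (hderiv : ∀ s > (0 : ℝ), HasDerivAt H (h s) s)
    (hhom : ∀ s > (0 : ℝ), ∀ θ ∈ Set.Icc (0 : ℝ) 1, θ * h s ≤ h (θ * s))
    (hbound : ∀ s > (0 : ℝ), (1 / 2) * h s * s ≤ H s ∧ H s ≤ h s * s) :
    ∀ s > (0 : ℝ), ∀ t > (0 : ℝ), ∀ θ ∈ Set.Ioc (0 : ℝ) 1,
      h s * t ≤ θ * H s + (1 / θ) * H t := by
  -- tangent line inequality: for s, u > 0, H s + h s * (u - s) ≤ H u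
  have tangent : ∀ s > (0 : ℝ), ∀ u > (0 : ℝ), H s + h s * (u - s) ≤ H u := by
    intro s hs u hu
    rcases lt_trichotomy s u with hsu | rfl | hus
    · have := hconv.le_slope_of_hasDerivAt (Set.mem_univ s) (Set.mem_univ u) hsu
        (hderiv s hs)
      rw [slope_def_field, le_div_iff₀ (by linarith)] at this
      nlinarith
    · simp
    · have := hconv.slope_le_of_hasDerivAt (Set.mem_univ u) (Set.mem_univ s) hus
        (hderiv s hs)
      rw [slope_def_field, div_le_iff₀ (by linarith)] at this
      nlinarith
  -- φ(r) = H r / r² is antitone on (0, ∞); consequence: H (θ*u) ≥ θ² * H u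
  have scaling : ∀ u > (0 : ℝ), ∀ θ ∈ Set.Ioc (0 : ℝ) 1, θ ^ 2 * H u ≤ H (θ * u) := by
    intro u hu θ ⟨hθ0, hθ1⟩
    set φ : ℝ → ℝ := fun r => H r / r ^ 2 with hφ
    have hθu : 0 < θ * u := mul_pos hθ0 hu
    have hderφ : ∀ r > (0 : ℝ), HasDerivAt φ
        ((h r * r ^ 2 - H r * (2 * r)) / (r ^ 2) ^ 2) r := by
      intro r hr
      have h1 : HasDerivAt (fun r : ℝ => r ^ 2) (2 * r) r := by
        simpa using hasDerivAt_pow 2 r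
      exact (hderiv r hr).div h1 (by positivity)
    have hanti : AntitoneOn φ (Set.Icc (θ * u) u) := by
      apply antitoneOn_of_deriv_nonpos (convex_Icc _ _)
      · intro r hr
        have hr0 : 0 < r := lt_of_lt_of_le hθu hr.1
        exact ((hderφ r hr0).continuousAt).continuousWithinAt
      · intro r hr
        rw [interior_Icc] at hr
        have hr0 : 0 < r := lt_of_lt_of_le hθu hr.1.le
        exact (hderφ r hr0).differentiableAt.differentiableWithinAt
      · intro r hr
        rw [interior_Icc] at hr
        have hr0 : 0 < r := lt_of_lt_of_le hθu hr.1.le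
        rw [(hderφ r hr0).deriv]
        have := (hbound r hr0).1
        have : h r * r ^ 2 - H r * (2 * r) ≤ 0 := by nlinarith
        have hpos : (0:ℝ) < (r ^ 2) ^ 2 := by positivity
        exact div_nonpos_of_nonpos_of_nonneg this hpos.le
    have hmem1 : θ * u ∈ Set.Icc (θ * u) u :=
      ⟨le_refl _, by nlinarith⟩
    have hmem2 : u ∈ Set.Icc (θ * u) u := ⟨by nlinarith, le_refl _⟩
    have := hanti hmem1 hmem2 (by nlinarith)
    rw [hφ] at this
    simp only at this
    rw [div_le_div_iff₀ (by positivity) (by positivity),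
      show (θ * u) ^ 2 = θ ^ 2 * u ^ 2 by ring] at this
    have hu2 : (0:ℝ) < u ^ 2 := by positivity
    exact le_of_mul_le_mul_right (by nlinarith) hu2
  intro s hs t ht θ ⟨hθ0, hθ1⟩
  have hu0 : 0 < t / θ := div_pos ht hθ0
  obtain ⟨u, hu0, htθ⟩ : ∃ u, 0 < u ∧ θ * u = t := ⟨t / θ, hu0, by field_simp⟩
  have h1 : H s + h s * (u - s) ≤ H u := tangent s hs u hu0
  have h2 : θ ^ 2 * H u ≤ H (θ * u) := scaling u hu0 θ ⟨hθ0, hθ1⟩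
  have h3 : h s * s ≤ 2 * H s := by have := (hbound s hs).1; linarith
  -- h s * u ≤ H u + H s
  have h4 : h s * u ≤ H u + H s := by nlinarith
  -- conclude
  rw [← htθ]
  have h5 : θ * H u ≤ 1 / θ * H (θ * u) := by
    rw [div_mul_eq_mul_div, le_div_iff₀ hθ0]
    nlinarith
  calc h s * (θ * u) = θ * (h s * u) := by ring
    _ ≤ θ * (H u + H s) := by nlinarith
    _ = θ * H s + θ * H u := by ring
    _ ≤ θ * H s + (1 / θ) * H (θ * u) := by linarith
end
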